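/- Any full BFB sequence can be reduced to a reduced BFB sequence (one with all terms strictly positive) by repeatedly replacing a consecutive pair (r_{k-1}, r_k) with r_k ≤ 0 by the single term r_{k-1} + r_k, and this procedure terminates, preserving the final partial sum s_n. -/

import Mathlib

/-- The `k`-th partial sum of a list of integers. -/
def partialSum (l : List ℤ) (k : ℕ) : ℤ := (l.take k).sum

/-- A full BFB sequence as a list: first term `1` and
`-s k < r (k+1) ≤ s k` for every later term. -/
def IsFullBFBList (l : List ℤ) : Prop :=
  l ≠ [] ∧ l.headI = 1 ∧
    ∀ k, k + 1 < l.length →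
      -(partialSum l (k + 1)) < l.getD (k + 1) 0 ∧
        l.getD (k + 1) 0 ≤ partialSum l (k + 1)

/-- A reduced BFB sequence as a list: all terms strictly positive, first term
`1`, and each later term at most the preceding partial sum. -/
def IsReducedBFBList (l : List ℤ) : Prop :=
  l ≠ [] ∧ l.headI = 1 ∧ (∀ x ∈ l, 0 < x) ∧
    ∀ k, k + 1 < l.length → l.getD (k + 1) 0 ≤ partialSum l (k + 1)

/-- One reduction step: merge a nonpositive term into its predecessor. -/
def MergeStep (l l' : List ℤ) : Prop :=
  ∃ p q a b, b ≤ 0 ∧ l = p ++ [a, b] ++ q ∧ l' = p ++ [a + b] ++ q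

lemma partialSum_cons (x : ℤ) (t : List ℤ) (m : ℕ) :
    partialSum (x :: t) (m + 1) = x + partialSum t m := by
  simp [partialSum]

lemma partialSum_prefix (p r : List ℤ) (m : ℕ) (h : m ≤ p.length) :
    partialSum (p ++ r) m = partialSum p m := by
  simp [partialSum, List.take_append_of_le_length h]

lemma partialSum_append' (p r : List ℤ) (i : ℕ) :
    partialSum (p ++ r) (p.length + i) = p.sum + partialSum r i := by
  simp [partialSum, List.take_append, List.take_of_length_le (Nat.le_add_right p.length i)]

lemma partialSum_self (p : List ℤ) : partialSum p p.length = p.sum := by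
  simp [partialSum]

lemma merge_full (p q : List ℤ) (a b : ℤ) (hb : b ≤ 0)
    (hl : IsFullBFBList (p ++ a :: b :: q)) :
    IsFullBFBList (p ++ (a + b) :: q) := by
  obtain ⟨hne, hhead, hcon⟩ := hl
  have hlen : (p ++ a :: b :: q).length = p.length + 2 + q.length := by simp; omega
  have hlen' : (p ++ (a + b) :: q).length = p.length + 1 + q.length := by simp; omega
  refine ⟨by simp, ?_, ?_⟩
  · -- head
    cases p with
    | nil =>
      simp at hhead ⊢
      have h0 := hcon 0 (by rw [hlen]; omega)
      simp [List.getD] at h0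
      rw [show partialSum (a :: b :: q) 1 = a by simp [partialSum]] at h0
      omega
    | cons x p' => simpa using hhead
  · intro k hk
    rw [hlen'] at hk
    rcases lt_trichotomy (k + 1) p.length with h | h | h
    · -- within p
      rw [List.getD_append _ _ _ _ h, partialSum_prefix _ _ _ (le_of_lt h)]
      have := hcon k (by rw [hlen]; omega)
      rwa [List.getD_append _ _ _ _ h, partialSum_prefix _ _ _ (le_of_lt h)] at this
    · -- the merged term
      have hk1 : 1 ≤ p.length := by omega
      have h1 := hcon k (by rw [hlen]; omega)
      have h2 := hcon (k + 1) (by rw [hlen]; omega)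
      rw [show k + 1 + 1 = p.length + 1 by omega,
        List.getD_append_right _ _ _ _ (by omega),
        show p.length + 1 - p.length = 1 by omega, partialSum_append' p _ 1] at h2
      rw [h] at h1 ⊢
      rw [List.getD_append_right _ _ _ _ le_rfl, Nat.sub_self,
        partialSum_prefix _ _ _ le_rfl, partialSum_self] at h1
      rw [List.getD_append_right _ _ _ _ le_rfl, Nat.sub_self,
        partialSum_prefix _ _ _ le_rfl, partialSum_self]
      simp [List.getD] at h1 h2 ⊢
      rw [show partialSum (a :: b :: q) 1 = a by simp [partialSum]] at h2
      constructor <;> linarith [h1.1, h1.2, h2.1, h2.2]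
    · -- beyond the merged term
      obtain ⟨i, hi⟩ : ∃ i, k + 1 = p.length + 1 + i := ⟨k + 1 - p.length - 1, by omega⟩
      have h2 := hcon (k + 1) (by rw [hlen]; omega)
      rw [show k + 1 + 1 = p.length + (i + 2) by omega, partialSum_append',
        List.getD_append_right _ _ _ _ (by omega),
        show p.length + (i + 2) - p.length = i + 2 by omega] at h2
      rw [hi, show p.length + 1 + i = p.length + (i + 1) by omega, partialSum_append',
        List.getD_append_right _ _ _ _ (by omega),
        show p.length + (i + 1) - p.length = i + 1 by omega]
      rw [show partialSum ((a + b) :: q) (i + 1) = (a + b) + partialSum q i from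
        partialSum_cons _ _ _] at *
      rw [show partialSum (a :: b :: q) (i + 2) = a + (b + partialSum q i) by
        rw [partialSum_cons, partialSum_cons]] at h2
      rw [List.getD_cons_succ, List.getD_cons_succ] at h2
      rw [List.getD_cons_succ]
      constructor <;> linarith [h2.1, h2.2]

lemma find_nonpos (x : ℤ) (t : List ℤ) (h : ∃ y ∈ t, y ≤ 0) :
    ∃ p a b q, x :: t = p ++ a :: b :: q ∧ b ≤ 0 := by
  induction t generalizing x with
  | nil => simp at h
  | cons y t ih =>
    by_cases hy : y ≤ 0
    · exact ⟨[], x, y, t, rfl, hy⟩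
    · obtain ⟨z, hz, hz0⟩ := h
      rcases List.mem_cons.mp hz with rfl | hz'
      · omega
      · obtain ⟨p, a, b, q, heq, hb⟩ := ih y ⟨z, hz', hz0⟩
        exact ⟨x :: p, a, b, q, by rw [List.cons_append, ← heq], hb⟩

lemma reduce_aux : ∀ N l, l.length ≤ N → IsFullBFBList l →
    ∃ l', Relation.ReflTransGen MergeStep l l' ∧ IsReducedBFBList l' ∧ l'.sum = l.sum := by
  intro N
  induction N with
  | zero =>
    intro l h hl
    exact absurd (List.length_eq_zero_iff.mp (Nat.le_zero.mp h)) hl.1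
  | succ N ih =>
    intro l hlen hl
    by_cases hpos : ∀ x ∈ l, 0 < x
    · exact ⟨l, .refl, ⟨hl.1, hl.2.1, hpos, fun k hk => (hl.2.2 k hk).2⟩, rfl⟩
    · push_neg at hpos
      obtain ⟨z, hz, hz0⟩ := hpos
      cases l with
      | nil => exact absurd rfl hl.1
      | cons x t =>
        have hx : x = 1 := hl.2.1
        have hzt : z ∈ t := by
          rcases List.mem_cons.mp hz with rfl | h'
          · omega
          · exact h'
        obtain ⟨p, a, b, q, heq, hb⟩ := find_nonpos x t ⟨z, hzt, hz0⟩
        have step : MergeStep (x :: t) (p ++ (a + b) :: q) :=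
          ⟨p, q, a, b, hb, by simpa using heq, by simp⟩
        have hfull' := merge_full p q a b hb (heq ▸ hl)
        have hlen' : (p ++ (a + b) :: q).length ≤ N := by
          rw [heq] at hlen; simp at hlen ⊢; omega
        obtain ⟨l', hrt, hred, hsum⟩ := ih _ hlen' hfull'
        refine ⟨l', .head step hrt, hred, ?_⟩
        rw [hsum, heq]
        simp [List.sum_append]
        ring

/-- Any full BFB sequence can be reduced, by repeatedly merging a nonpositive
term into its predecessor, to a reduced BFB sequence; each step strictly
decreases the length (so the procedure terminates), and the total sum is
preserved. -/
theorem full_bfb_reduces (l : List ℤ) (hl : IsFullBFBList l) :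
    (∀ x y : List ℤ, MergeStep x y → y.length < x.length) ∧
    ∃ l', Relation.ReflTransGen MergeStep l l' ∧
      IsReducedBFBList l' ∧ l'.sum = l.sum := by
  constructor
  · rintro x y ⟨p, q, a, b, -, rfl, rfl⟩
    simp
  · exact reduce_aux l.length l le_rfl hl
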